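/- Let $\nu$ be a measure on $\mathbb{R}^d$ with $\nu(\{0\})=0$, and define $\mathcal{A}_2(\nu)(B) = \int_{\mathbb{R}^d \setminus \{0\}} \int_0^{|x|} \frac{2}{\pi}(|x|^2 - r^2)^{-1/2} 1_B(r x/|x|)\,dr\,\nu(dx)$. Then $\mathcal{A}_2(\nu)$ is a L\'evy measure if and only if $\nu$ is a L\'evy measure, i.e. $\int_{\mathbb{R}^d}(1\wedge |x|^2)\,\nu(dx) < \infty$. -/

import Mathlib

open MeasureTheory Real Set ENNReal

variable {d : ℕ}

/-- The arcsine transformation `𝒜ₖ` of a measure on `ℝᵈ` (for `k = 1, 2`):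
`𝒜ₖ(ν)(B) = ∫ ν(dx) ∫₀^{|x|^{k/2}} (2/π)(|x|^k - r²)^{-1/2} 1_B(r x/|x|) dr`. -/
noncomputable def arcsineT (k : ℝ) (ν : Measure (EuclideanSpace ℝ (Fin d))) :
    Measure (EuclideanSpace ℝ (Fin d)) :=
  (ν.restrict {(0 : EuclideanSpace ℝ (Fin d))}ᶜ).bind fun x =>
    Measure.map (fun r : ℝ => (r / ‖x‖) • x)
      ((volume.restrict (Set.Ioo (0 : ℝ) (‖x‖ ^ (k / 2)))).withDensity
        (fun r => ENNReal.ofReal (2 / Real.pi * (‖x‖ ^ k - r ^ 2) ^ (-(1/2) : ℝ))))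

noncomputable def asKer (x : EuclideanSpace ℝ (Fin d)) : Measure (EuclideanSpace ℝ (Fin d)) :=
  Measure.map (fun r : ℝ => (r / ‖x‖) • x)
    ((volume.restrict (Set.Ioo (0 : ℝ) (‖x‖ ^ ((2:ℝ) / 2)))).withDensity
      (fun r => ENNReal.ofReal (2 / Real.pi * (‖x‖ ^ (2:ℝ) - r ^ 2) ^ (-(1/2) : ℝ))))

lemma arcsineT_two_eq (ν : Measure (EuclideanSpace ℝ (Fin d))) :
    arcsineT 2 ν = (ν.restrict {(0 : EuclideanSpace ℝ (Fin d))}ᶜ).bind asKer := rfl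

lemma my_measurable_rpow_const (c : ℝ) : Measurable fun x : ℝ => x ^ c :=
  measurable_of_continuousOn_compl_singleton 0 fun x hx =>
    (Real.continuousAt_rpow_const x c (Or.inl hx)).continuousWithinAt

lemma meas_g : Measurable fun y : EuclideanSpace ℝ (Fin d) =>
    ENNReal.ofReal (min 1 (‖y‖ ^ 2)) :=
  ENNReal.measurable_ofReal.comp (measurable_const.min (measurable_norm.pow_const 2))

lemma meas_T : Measurable fun p : (EuclideanSpace ℝ (Fin d)) × ℝ => (p.2 / ‖p.1‖) • p.1 :=
  (measurable_snd.div measurable_fst.norm).smul measurable_fst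

lemma meas_dens : Measurable fun p : (EuclideanSpace ℝ (Fin d)) × ℝ =>
    ENNReal.ofReal (2 / Real.pi * (‖p.1‖ ^ (2:ℝ) - p.2 ^ 2) ^ (-(1/2) : ℝ)) :=
  ENNReal.measurable_ofReal.comp <| measurable_const.mul <|
    (my_measurable_rpow_const _).comp
      (((my_measurable_rpow_const _).comp measurable_fst.norm).sub (measurable_snd.pow_const 2))

lemma meas_asKer : Measurable (asKer (d := d)) := by
  apply Measure.measurable_of_measurable_coe
  intro s hs
  have hA : MeasurableSet {p : (EuclideanSpace ℝ (Fin d)) × ℝ |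
      (p.2 / ‖p.1‖) • p.1 ∈ s ∧ p.2 ∈ Set.Ioo 0 (‖p.1‖ ^ ((2:ℝ)/2))} := by
    refine (meas_T hs).inter ?_
    exact (measurableSet_lt measurable_const measurable_snd).inter
      (measurableSet_lt measurable_snd
        ((my_measurable_rpow_const _).comp measurable_fst.norm))
  have heq : ∀ x : EuclideanSpace ℝ (Fin d), asKer x s =
      ∫⁻ r, Set.indicator {p : (EuclideanSpace ℝ (Fin d)) × ℝ |
          (p.2 / ‖p.1‖) • p.1 ∈ s ∧ p.2 ∈ Set.Ioo 0 (‖p.1‖ ^ ((2:ℝ)/2))}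
        (fun p => ENNReal.ofReal (2 / Real.pi * (‖p.1‖ ^ (2:ℝ) - p.2 ^ 2) ^ (-(1/2) : ℝ)))
        (x, r) ∂volume := by
    intro x
    have hTx : Measurable fun r : ℝ => (r / ‖x‖) • x :=
      meas_T.comp (measurable_const.prodMk measurable_id)
    have hpre : MeasurableSet ((fun r : ℝ => (r / ‖x‖) • x) ⁻¹' s) := hTx hs
    rw [asKer, Measure.map_apply hTx hs, withDensity_apply _ hpre,
      Measure.restrict_restrict hpre, ← lintegral_indicator (hpre.inter measurableSet_Ioo)]
    refine lintegral_congr fun r => ?_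
    classical
    rw [Set.indicator_apply, Set.indicator_apply]
    by_cases h : ((r / ‖x‖) • x ∈ s ∧ r ∈ Set.Ioo 0 (‖x‖ ^ ((2:ℝ)/2)))
    · rw [if_pos (show r ∈ (fun r : ℝ => (r / ‖x‖) • x) ⁻¹' s ∩ Set.Ioo 0 (‖x‖ ^ ((2:ℝ)/2))
          from ⟨h.1, h.2⟩),
        if_pos (show (x, r) ∈ {p : (EuclideanSpace ℝ (Fin d)) × ℝ |
          (p.2 / ‖p.1‖) • p.1 ∈ s ∧ p.2 ∈ Set.Ioo 0 (‖p.1‖ ^ ((2:ℝ)/2))} from h)]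
    · rw [if_neg (show ¬ r ∈ (fun r : ℝ => (r / ‖x‖) • x) ⁻¹' s ∩ Set.Ioo 0 (‖x‖ ^ ((2:ℝ)/2))
          from fun hc => h ⟨hc.1, hc.2⟩),
        if_neg (show ¬ (x, r) ∈ {p : (EuclideanSpace ℝ (Fin d)) × ℝ |
          (p.2 / ‖p.1‖) • p.1 ∈ s ∧ p.2 ∈ Set.Ioo 0 (‖p.1‖ ^ ((2:ℝ)/2))} from h)]
  simp only [heq]
  exact Measurable.lintegral_prod_right (meas_dens.indicator hA)

lemma asKer_lintegral {x : EuclideanSpace ℝ (Fin d)} (hx : x ≠ 0) :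
    ∫⁻ y, ENNReal.ofReal (min 1 (‖y‖ ^ 2)) ∂(asKer x) =
      ∫⁻ r in Set.Ioo (0:ℝ) ‖x‖,
        ENNReal.ofReal (2 / Real.pi * (‖x‖ ^ 2 - r ^ 2) ^ (-(1/2) : ℝ)) *
          ENNReal.ofReal (min 1 (r ^ 2)) := by
  have hs : (0:ℝ) < ‖x‖ := norm_pos_iff.mpr hx
  have hTx : Measurable fun r : ℝ => (r / ‖x‖) • x :=
    (measurable_id.div_const ‖x‖).smul_const x
  have hdx : Measurable fun r : ℝ =>
      ENNReal.ofReal (2 / Real.pi * (‖x‖ ^ (2:ℝ) - r ^ 2) ^ (-(1/2) : ℝ)) :=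
    ENNReal.measurable_ofReal.comp <| measurable_const.mul <|
      (my_measurable_rpow_const _).comp (measurable_const.sub (measurable_id.pow_const 2))
  rw [asKer]
  rw [lintegral_map meas_g hTx]
  rw [lintegral_withDensity_eq_lintegral_mul (g := fun a : ℝ =>
    ENNReal.ofReal (min 1 (‖(a / ‖x‖) • x‖ ^ 2))) _ hdx (meas_g.comp hTx)]
  rw [show ((2:ℝ)/2) = 1 by norm_num, Real.rpow_one]
  refine setLIntegral_congr_fun measurableSet_Ioo (fun r hr => ?_)
  have hnr : ‖(r / ‖x‖) • x‖ = r := by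
    rw [norm_smul, Real.norm_eq_abs, abs_of_pos (div_pos hr.1 hs), div_mul_cancel₀ _ hs.ne']
  simp only [Pi.mul_apply, Function.comp_apply, hnr, Real.rpow_two]

lemma arcsine_lower {s : ℝ} (hs : 0 < s) :
    ENNReal.ofReal (min 1 (s ^ 2)) * ENNReal.ofReal (1 / (4 * Real.pi)) ≤
      ∫⁻ r in Set.Ioo (0:ℝ) s,
        ENNReal.ofReal (2 / Real.pi * (s ^ 2 - r ^ 2) ^ (-(1/2) : ℝ)) *
          ENNReal.ofReal (min 1 (r ^ 2)) := by
  have hπ : 0 < Real.pi := Real.pi_pos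
  have hmin : (0:ℝ) ≤ min 1 (s ^ 2) := le_min zero_le_one (sq_nonneg s)
  have hsub : Set.Ioo (s/2) s ⊆ Set.Ioo 0 s := fun r hr => ⟨by linarith [hr.1], hr.2⟩
  refine le_trans ?_ (lintegral_mono_set hsub)
  have hmeas : Measurable fun r : ℝ =>
      ENNReal.ofReal (2 / Real.pi * (s ^ 2 - r ^ 2) ^ (-(1/2) : ℝ)) *
        ENNReal.ofReal (min 1 (r ^ 2)) := by
    refine Measurable.fun_mul ?_ ?_
    · exact ENNReal.measurable_ofReal.comp <| measurable_const.mul <|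
        (my_measurable_rpow_const _).comp (measurable_const.sub (measurable_id.pow_const 2))
    · exact ENNReal.measurable_ofReal.comp (measurable_const.min (measurable_id.pow_const 2))
  have hc : (0:ℝ) ≤ 2 / Real.pi * (1/s) * (min 1 (s ^ 2) / 4) := by
    apply mul_nonneg (by positivity) (by linarith)
  have hpt : ∀ r ∈ Set.Ioo (s/2) s,
      ENNReal.ofReal (2 / Real.pi * (1/s) * (min 1 (s ^ 2) / 4)) ≤
        ENNReal.ofReal (2 / Real.pi * (s ^ 2 - r ^ 2) ^ (-(1/2) : ℝ)) *
          ENNReal.ofReal (min 1 (r ^ 2)) := by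
    intro r hr
    have hr1 : s/2 < r := hr.1
    have hr2 : r < s := hr.2
    have hrpos : 0 < r := by linarith
    have hlt : 0 < s ^ 2 - r ^ 2 := by nlinarith
    rw [← ENNReal.ofReal_mul (mul_nonneg (by positivity) (Real.rpow_nonneg hlt.le _))]
    apply ENNReal.ofReal_le_ofReal
    have h1 : (1:ℝ)/s ≤ (s ^ 2 - r ^ 2) ^ (-(1/2) : ℝ) := by
      have hle : s ^ 2 - r ^ 2 ≤ s ^ 2 := by nlinarith
      have h := Real.rpow_le_rpow_of_nonpos hlt hle (by norm_num : (-(1/2):ℝ) ≤ 0)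
      have hss : ((s ^ 2 : ℝ)) ^ (-(1/2) : ℝ) = 1/s := by
        rw [← Real.rpow_two, ← Real.rpow_mul hs.le]
        norm_num [Real.rpow_neg_one]
      rwa [hss] at h
    have h2 : min 1 (s ^ 2) / 4 ≤ min 1 (r ^ 2) := by
      rcases le_total (s ^ 2) 1 with h | h
      · rw [min_eq_right h]
        exact le_min (by nlinarith) (by nlinarith)
      · rw [min_eq_left h]
        have hs1 : (1:ℝ) ≤ s := by nlinarith
        exact le_min (by norm_num) (by nlinarith)
    exact mul_le_mul (mul_le_mul_of_nonneg_left h1 (by positivity)) h2 (by linarith)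
      (mul_nonneg (by positivity) (Real.rpow_nonneg hlt.le _))
  refine le_trans (le_of_eq ?_) (setLIntegral_mono hmeas hpt)
  rw [setLIntegral_const, Real.volume_Ioo,
    ← ENNReal.ofReal_mul hmin, ← ENNReal.ofReal_mul hc]
  congr 1
  field_simp
  ring

lemma sqrt_integral_eq {s : ℝ} (hs : 0 < s) :
    ∫⁻ r in Set.Ioo (0:ℝ) s, ENNReal.ofReal ((s - r) ^ (-(1/2) : ℝ)) =
      ENNReal.ofReal (2 * s ^ ((1/2) : ℝ)) := by
  have hint : IntervalIntegrable (fun u : ℝ => u ^ (-(1/2) : ℝ)) volume 0 s :=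
    intervalIntegral.intervalIntegrable_rpow' (by norm_num)
  have hint2 : IntervalIntegrable (fun r : ℝ => (s - r) ^ (-(1/2) : ℝ)) volume 0 s := by
    have h := (hint.comp_sub_left s).symm
    simpa using h
  have hIoo : IntegrableOn (fun r : ℝ => (s - r) ^ (-(1/2) : ℝ)) (Set.Ioo 0 s) volume :=
    ((intervalIntegrable_iff_integrableOn_Ioc_of_le hs.le).mp hint2).mono_set
      Set.Ioo_subset_Ioc_self
  have hnn : 0 ≤ᵐ[volume.restrict (Set.Ioo (0:ℝ) s)]
      fun r : ℝ => (s - r) ^ (-(1/2) : ℝ) := by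
    refine (ae_restrict_iff' measurableSet_Ioo).2 (ae_of_all _ fun r hr => ?_)
    exact Real.rpow_nonneg (by linarith [hr.2]) _
  rw [← ofReal_integral_eq_lintegral_ofReal hIoo hnn]
  congr 1
  have h1 : ∫ r in Set.Ioo (0:ℝ) s, (s - r) ^ (-(1/2) : ℝ) =
      ∫ r in (0:ℝ)..s, (s - r) ^ (-(1/2) : ℝ) := by
    rw [intervalIntegral.integral_of_le hs.le, ← integral_Ioc_eq_integral_Ioo]
  rw [h1, intervalIntegral.integral_comp_sub_left (fun u : ℝ => u ^ (-(1/2) : ℝ)) s,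
    sub_self, sub_zero, integral_rpow (Or.inl (by norm_num))]
  rw [Real.zero_rpow (by norm_num)]
  norm_num
  rw [div_eq_iff (by norm_num : ((1:ℝ)/2) ≠ 0)]
  ring

lemma arcsine_upper {s : ℝ} (hs : 0 < s) :
    (∫⁻ r in Set.Ioo (0:ℝ) s,
        ENNReal.ofReal (2 / Real.pi * (s ^ 2 - r ^ 2) ^ (-(1/2) : ℝ)) *
          ENNReal.ofReal (min 1 (r ^ 2))) ≤
      ENNReal.ofReal (min 1 (s ^ 2)) * ENNReal.ofReal (4 / Real.pi) := by
  have hπ : 0 < Real.pi := Real.pi_pos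
  have hmin : (0:ℝ) ≤ min 1 (s ^ 2) := le_min zero_le_one (sq_nonneg s)
  have hmeas : Measurable fun r : ℝ =>
      ENNReal.ofReal (2 / Real.pi * s ^ (-(1/2) : ℝ) * min 1 (s ^ 2)) *
        ENNReal.ofReal ((s - r) ^ (-(1/2) : ℝ)) :=
    measurable_const.mul (ENNReal.measurable_ofReal.comp
      ((my_measurable_rpow_const _).comp (measurable_const.sub measurable_id)))
  have hpt : ∀ r ∈ Set.Ioo (0:ℝ) s,
      ENNReal.ofReal (2 / Real.pi * (s ^ 2 - r ^ 2) ^ (-(1/2) : ℝ)) *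
          ENNReal.ofReal (min 1 (r ^ 2)) ≤
      ENNReal.ofReal (2 / Real.pi * s ^ (-(1/2) : ℝ) * min 1 (s ^ 2)) *
        ENNReal.ofReal ((s - r) ^ (-(1/2) : ℝ)) := by
    intro r hr
    have hr1 : 0 < r := hr.1
    have hr2 : r < s := hr.2
    have hlt : 0 < s ^ 2 - r ^ 2 := by nlinarith
    rw [← ENNReal.ofReal_mul (mul_nonneg (by positivity) (Real.rpow_nonneg hlt.le _)),
      ← ENNReal.ofReal_mul (mul_nonneg (by positivity)
        (le_min zero_le_one (sq_nonneg s)))]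
    apply ENNReal.ofReal_le_ofReal
    have h1 : (s ^ 2 - r ^ 2) ^ (-(1/2) : ℝ) ≤ (s - r) ^ (-(1/2) : ℝ) * s ^ (-(1/2) : ℝ) := by
      have hpos : 0 < (s - r) * s := by nlinarith
      have hle : (s - r) * s ≤ s ^ 2 - r ^ 2 := by nlinarith
      have h := Real.rpow_le_rpow_of_nonpos hpos hle (by norm_num : (-(1/2):ℝ) ≤ 0)
      rwa [Real.mul_rpow (by linarith : (0:ℝ) ≤ s - r) hs.le] at h
    have h2 : min 1 (r ^ 2) ≤ min 1 (s ^ 2) := min_le_min le_rfl (by nlinarith)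
    have hrnn : (0:ℝ) ≤ min 1 (r ^ 2) := le_min zero_le_one (sq_nonneg r)
    calc 2 / Real.pi * (s ^ 2 - r ^ 2) ^ (-(1/2) : ℝ) * min 1 (r ^ 2)
        ≤ 2 / Real.pi * ((s - r) ^ (-(1/2) : ℝ) * s ^ (-(1/2) : ℝ)) * min 1 (s ^ 2) :=
          mul_le_mul (mul_le_mul_of_nonneg_left h1 (by positivity)) h2 hrnn
            (mul_nonneg (by positivity)
              (mul_nonneg (Real.rpow_nonneg (by linarith) _) (Real.rpow_nonneg hs.le _)))
      _ = 2 / Real.pi * s ^ (-(1/2) : ℝ) * min 1 (s ^ 2) * (s - r) ^ (-(1/2) : ℝ) := by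
          ring
  refine le_trans (setLIntegral_mono hmeas hpt) ?_
  have hf : Measurable fun r : ℝ => ENNReal.ofReal ((s - r) ^ (-(1/2) : ℝ)) :=
    ENNReal.measurable_ofReal.comp
      ((my_measurable_rpow_const _).comp (measurable_const.sub measurable_id))
  rw [lintegral_const_mul _ hf,
    sqrt_integral_eq hs, ← ENNReal.ofReal_mul (mul_nonneg (by positivity) hmin),
    ← ENNReal.ofReal_mul hmin]
  apply ENNReal.ofReal_le_ofReal
  apply le_of_eq
  have hss : s ^ (-(1/2) : ℝ) * s ^ ((1/2) : ℝ) = 1 := by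
    rw [← Real.rpow_add hs]
    norm_num
  calc 2 / Real.pi * s ^ (-(1/2) : ℝ) * min 1 (s ^ 2) * (2 * s ^ ((1/2) : ℝ))
      = min 1 (s ^ 2) * (4 / Real.pi) * (s ^ (-(1/2) : ℝ) * s ^ ((1/2) : ℝ)) := by ring
    _ = min 1 (s ^ 2) * (4 / Real.pi) := by rw [hss, mul_one]

theorem arcsineT_two_levyMeasure_iff (ν : Measure (EuclideanSpace ℝ (Fin d)))
    (hν : ν {0} = 0) :
    (∫⁻ y, ENNReal.ofReal (min 1 (‖y‖ ^ 2)) ∂(arcsineT 2 ν) < ⊤) ↔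
      (∫⁻ x, ENNReal.ofReal (min 1 (‖x‖ ^ 2)) ∂ν < ⊤) := by
  have hπ : 0 < Real.pi := Real.pi_pos
  have hres : ν.restrict {(0 : EuclideanSpace ℝ (Fin d))}ᶜ = ν :=
    Measure.restrict_eq_self_of_ae_mem (by rw [ae_iff]; simpa using hν)
  have key : ∫⁻ y, ENNReal.ofReal (min 1 (‖y‖ ^ 2)) ∂(arcsineT 2 ν) =
      ∫⁻ x, (∫⁻ y, ENNReal.ofReal (min 1 (‖y‖ ^ 2)) ∂(asKer x)) ∂ν := by
    rw [arcsineT_two_eq, Measure.lintegral_bind meas_asKer.aemeasurable meas_g.aemeasurable, hres]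
  have hae : ∀ᵐ x ∂ν, x ≠ (0 : EuclideanSpace ℝ (Fin d)) := by
    rw [ae_iff]; simpa using hν
  have hup : ∫⁻ y, ENNReal.ofReal (min 1 (‖y‖ ^ 2)) ∂(arcsineT 2 ν) ≤
      (∫⁻ x, ENNReal.ofReal (min 1 (‖x‖ ^ 2)) ∂ν) * ENNReal.ofReal (4 / Real.pi) := by
    rw [key, ← lintegral_mul_const _ meas_g]
    refine lintegral_mono_ae ?_
    filter_upwards [hae] with x hx
    rw [asKer_lintegral hx]
    exact arcsine_upper (norm_pos_iff.mpr hx)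
  have hlo : (∫⁻ x, ENNReal.ofReal (min 1 (‖x‖ ^ 2)) ∂ν) * ENNReal.ofReal (1 / (4 * Real.pi)) ≤
      ∫⁻ y, ENNReal.ofReal (min 1 (‖y‖ ^ 2)) ∂(arcsineT 2 ν) := by
    rw [key, ← lintegral_mul_const _ meas_g]
    refine lintegral_mono_ae ?_
    filter_upwards [hae] with x hx
    rw [asKer_lintegral hx]
    exact arcsine_lower (norm_pos_iff.mpr hx)
  constructor
  · intro h
    by_contra htop
    rw [not_lt, top_le_iff] at htop
    rw [htop, ENNReal.top_mul (by
      simp only [ne_eq, ENNReal.ofReal_eq_zero, not_le]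
      positivity)] at hlo
    exact absurd (lt_of_le_of_lt hlo h) (lt_irrefl _)
  · intro h
    exact lt_of_le_of_lt hup (ENNReal.mul_lt_top h ENNReal.ofReal_lt_top)
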